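/- arXiv:1906.06607 — 8 statements merged into one kernel-verified Lean document; each statement's English description precedes it below -/
import Mathlib

section
/- Let a, b, 1 be positive reals with a γ₁ + b γ₂ + 1 = 0 for complex γ₁, γ₂ with |γ₁| < 1 and |γ₂| < 1, and suppose a, b, 1 satisfy the triangle inequalities (a + b > 1, a + 1 > b, b + 1 > a). Then |a γ₂ + b γ₁ + γ₁ γ₂| < a(1 - |γ₁|²) + b(1 - |γ₂|²). -/
theorem stmt_0 (a b : ℝ) (γ₁ γ₂ : ℂ) (ha : 0 < a) (hb : 0 < b)
    (ht1 : a + b > 1) (ht2 : a + 1 > b) (ht3 : b + 1 > a)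
    (hγ₁ : ‖γ₁‖ < 1) (hγ₂ : ‖γ₂‖ < 1)
    (hlin : (a : ℂ) * γ₁ + (b : ℂ) * γ₂ + 1 = 0) :
    ‖(a : ℂ) * γ₂ + (b : ℂ) * γ₁ + γ₁ * γ₂‖
      < a * (1 - ‖γ₁‖ ^ 2) + b * (1 - ‖γ₂‖ ^ 2) := by
  have hconj : (a : ℂ) * (starRingEnd ℂ) γ₁ + (b : ℂ) * (starRingEnd ℂ) γ₂ + 1 = 0 := by
    have := congrArg (starRingEnd ℂ) hlin
    simpa using this
  have h1 : ((‖γ₁‖ ^ 2 : ℝ) : ℂ) = γ₁ * (starRingEnd ℂ) γ₁ := by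
    rw [Complex.mul_conj, Complex.sq_norm]
  have h2 : ((‖γ₂‖ ^ 2 : ℝ) : ℂ) = γ₂ * (starRingEnd ℂ) γ₂ := by
    rw [Complex.mul_conj, Complex.sq_norm]
  have key : (a : ℂ) * γ₂ + (b : ℂ) * γ₁ + γ₁ * γ₂
      = ((a * (1 - ‖γ₁‖ ^ 2) : ℝ) : ℂ) * γ₂
        + ((b * (1 - ‖γ₂‖ ^ 2) : ℝ) : ℂ) * γ₁ := by
    push_cast at h1 h2 ⊢
    linear_combination (γ₁ * γ₂) * hconj + (a : ℂ) * γ₂ * h1 + (b : ℂ) * γ₁ * h2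
  rw [key]
  have c1 : 0 < a * (1 - ‖γ₁‖ ^ 2) := by
    have : ‖γ₁‖ ^ 2 < 1 := by
      nlinarith [norm_nonneg γ₁]
    nlinarith
  have c2 : 0 < b * (1 - ‖γ₂‖ ^ 2) := by
    have : ‖γ₂‖ ^ 2 < 1 := by
      nlinarith [norm_nonneg γ₂]
    nlinarith
  calc ‖((a * (1 - ‖γ₁‖ ^ 2) : ℝ) : ℂ) * γ₂
        + ((b * (1 - ‖γ₂‖ ^ 2) : ℝ) : ℂ) * γ₁‖
      ≤ ‖((a * (1 - ‖γ₁‖ ^ 2) : ℝ) : ℂ) * γ₂‖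
        + ‖((b * (1 - ‖γ₂‖ ^ 2) : ℝ) : ℂ) * γ₁‖ :=
        norm_add_le _ _
    _ = a * (1 - ‖γ₁‖ ^ 2) * ‖γ₂‖
        + b * (1 - ‖γ₂‖ ^ 2) * ‖γ₁‖ := by
        rw [norm_mul, norm_mul, Complex.norm_real, Complex.norm_real, Real.norm_eq_abs, Real.norm_eq_abs,
          abs_of_pos c1, abs_of_pos c2]
    _ < a * (1 - ‖γ₁‖ ^ 2) + b * (1 - ‖γ₂‖ ^ 2) := by
        nlinarith [norm_nonneg γ₁, norm_nonneg γ₂]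
end

section
/- Let a, b be positive reals with a + b > 1, a + 1 > b, b + 1 > a, and let γ₁, γ₂ be complex numbers with |γ₁| < 1, |γ₂| < 1 and a γ₁ + b γ₂ + 1 = 0. Then |a(1 - |γ₁|²) - b(1 - |γ₂|²)| < |a γ₂ + b γ₁ + γ₁ γ₂|. -/
private lemma aux (a b : ℝ) (ha : 0 < a) (hb : 0 < b) :
    ∀ X Y : ℝ, 0 < a * b * X - a * b * Y → Y < X := by
  intro X Y h
  nlinarith [mul_pos ha hb]

theorem stmt_1 (a b : ℝ) (γ₁ γ₂ : ℂ) (ha : 0 < a) (hb : 0 < b)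
    (ht1 : a + b > 1) (ht2 : a + 1 > b) (ht3 : b + 1 > a)
    (hγ₁ : ‖γ₁‖ < 1) (hγ₂ : ‖γ₂‖ < 1)
    (hlin : (a : ℂ) * γ₁ + (b : ℂ) * γ₂ + 1 = 0) :
    |a * (1 - ‖γ₁‖ ^ 2) - b * (1 - ‖γ₂‖ ^ 2)|
      < ‖(a : ℂ) * γ₂ + (b : ℂ) * γ₁ + γ₁ * γ₂‖ := by
  obtain ⟨p, q⟩ := γ₁
  obtain ⟨r, s⟩ := γ₂
  have h1 : a * p + b * r + 1 = 0 := by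
    have := congrArg Complex.re hlin
    simpa using this
  have h2 : a * q + b * s = 0 := by
    have := congrArg Complex.im hlin
    simpa using this
  have e1 : ‖(⟨p, q⟩ : ℂ)‖ ^ 2 = p ^ 2 + q ^ 2 := by
    rw [Complex.sq_norm, Complex.normSq_apply]; ring
  have e2 : ‖(⟨r, s⟩ : ℂ)‖ ^ 2 = r ^ 2 + s ^ 2 := by
    rw [Complex.sq_norm, Complex.normSq_apply]; ring
  have hx : p ^ 2 + q ^ 2 < 1 := by
    rw [← e1]
    nlinarith [norm_nonneg (⟨p, q⟩ : ℂ)]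
  have hy : r ^ 2 + s ^ 2 < 1 := by
    rw [← e2]
    nlinarith [norm_nonneg (⟨r, s⟩ : ℂ)]
  have hr : r = (-(a * p) - 1) / b := by
    field_simp
    linarith
  have hs : s = -(a * q) / b := by
    field_simp
    linarith
  have hA : 0 < a * (1 - (p ^ 2 + q ^ 2)) := by nlinarith
  have hB : 0 < b * (1 - (r ^ 2 + s ^ 2)) := by nlinarith
  have hab : 0 < 1 - (a - b) ^ 2 := by nlinarith
  have hW : ‖(a : ℂ) * ⟨r, s⟩ + (b : ℂ) * ⟨p, q⟩ + (⟨p, q⟩ : ℂ) * ⟨r, s⟩‖ ^ 2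
      = (a * r + b * p + (p * r - q * s)) ^ 2 + (a * s + b * q + (p * s + q * r)) ^ 2 := by
    rw [Complex.sq_norm, Complex.normSq_apply]
    simp [Complex.add_re, Complex.add_im, Complex.mul_re, Complex.mul_im]
    ring
  have hid : a * b * ((a * r + b * p + (p * r - q * s)) ^ 2
        + (a * s + b * q + (p * s + q * r)) ^ 2)
      - a * b * (a * (1 - (p ^ 2 + q ^ 2)) - b * (1 - (r ^ 2 + s ^ 2))) ^ 2
      = (a * (1 - (p ^ 2 + q ^ 2))) * (b * (1 - (r ^ 2 + s ^ 2))) * (1 - (a - b) ^ 2) := by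
    rw [hr, hs]
    field_simp
    ring
  have hP : 0 < a * b * ((a * r + b * p + (p * r - q * s)) ^ 2
        + (a * s + b * q + (p * s + q * r)) ^ 2)
      - a * b * (a * (1 - (p ^ 2 + q ^ 2)) - b * (1 - (r ^ 2 + s ^ 2))) ^ 2 := by
    rw [hid]
    exact mul_pos (mul_pos hA hB) hab
  refine lt_of_pow_lt_pow_left₀ 2 (norm_nonneg _) ?_
  rw [sq_abs, e1, e2, hW]
  exact aux a b ha hb _ _ hP
end

section
/- Let a, b > 0 satisfy the triangle inequality with 1, and let γ₁, γ₂ ∈ 𝔻 satisfy a γ₁ + b γ₂ + 1 = 0. Then there exist exactly two pairs (ω, η) of unimodular complex numbers satisfying a ω (1 - |γ₁|²) + b η (1 - |γ₂|²) + a γ₂ + b γ₁ + γ₁ γ₂ = 0. -/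
set_option maxHeartbeats 1000000

private lemma abs_eq_one_of_normSq' {z : ℂ} (h : Complex.normSq z = 1) :
    ‖z‖ = 1 := by
  rw [Complex.norm_def, h, Real.sqrt_one]

theorem stmt_7 (a b : ℝ) (γ₁ γ₂ : ℂ) (ha : 0 < a) (hb : 0 < b)
    (ht1 : a + b > 1) (ht2 : a + 1 > b) (ht3 : b + 1 > a)
    (hγ₁ : ‖γ₁‖ < 1) (hγ₂ : ‖γ₂‖ < 1)
    (hlin : (a : ℂ) * γ₁ + (b : ℂ) * γ₂ + 1 = 0) :
    ∃ p₁ p₂ : ℂ × ℂ, p₁ ≠ p₂ ∧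
      ∀ p : ℂ × ℂ,
        (‖p.1‖ = 1 ∧ ‖p.2‖ = 1 ∧
          (a : ℂ) * p.1 * ((1 - ‖γ₁‖ ^ 2 : ℝ) : ℂ) +
            (b : ℂ) * p.2 * ((1 - ‖γ₂‖ ^ 2 : ℝ) : ℂ) +
            (a : ℂ) * γ₂ + (b : ℂ) * γ₁ + γ₁ * γ₂ = 0)
        ↔ (p = p₁ ∨ p = p₂) := by
  have hane : a ≠ 0 := ne_of_gt ha
  have hbne : b ≠ 0 := ne_of_gt hb
  have hg1 : Complex.normSq γ₁ < 1 := by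
    rw [← Complex.sq_norm]; exact pow_lt_one₀ (norm_nonneg γ₁) hγ₁ two_ne_zero
  have hg2 : Complex.normSq γ₂ < 1 := by
    rw [← Complex.sq_norm]; exact pow_lt_one₀ (norm_nonneg γ₂) hγ₂ two_ne_zero
  have hu : 0 < 1 - Complex.normSq γ₁ := by linarith
  have hm : 0 < 1 - Complex.normSq γ₂ := by linarith
  set A : ℝ := a * (1 - Complex.normSq γ₁) with hA_def
  set B : ℝ := b * (1 - Complex.normSq γ₂) with hB_def
  set C : ℂ := -((a : ℂ) * γ₂ + (b : ℂ) * γ₁ + γ₁ * γ₂) with hC_def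
  set N : ℝ := Complex.normSq C with hN_def
  have hA : 0 < A := mul_pos ha hu
  have hB : 0 < B := mul_pos hb hm
  have hγ1c : (a : ℂ) * γ₁ = -1 - (b : ℂ) * γ₂ := by linear_combination hlin
  have hre : a * γ₁.re = -1 - b * γ₂.re := by
    have := congrArg Complex.re hγ1c
    simpa [Complex.mul_re] using this
  have him : a * γ₁.im = -(b * γ₂.im) := by
    have := congrArg Complex.im hγ1c
    simpa [Complex.mul_im] using this
  have hCre : C.re = -(a * γ₂.re + b * γ₁.re + (γ₁.re * γ₂.re - γ₁.im * γ₂.im)) := by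
    simp [hC_def, Complex.mul_re]
  have hCim : C.im = -(a * γ₂.im + b * γ₁.im + (γ₁.re * γ₂.im + γ₁.im * γ₂.re)) := by
    simp [hC_def, Complex.mul_im]
  have hkey1 : a ^ 2 * ((A + B) ^ 2 - N) =
      (1 - Complex.normSq γ₂) * (a ^ 2 * (1 - Complex.normSq γ₁)) * ((a + b) ^ 2 - 1) := by
    rw [hN_def, Complex.normSq_apply, hCre, hCim, hA_def, hB_def,
      Complex.normSq_apply, Complex.normSq_apply]
    linear_combination (b^2*γ₂.im^2 + b^3*γ₂.re*γ₂.im^2 + (-1)*a*b^2*γ₁.re*γ₂.im^2 + a^2 + (-1)*a^2*γ₂.im^2 + (-1)*a^2*γ₂.re^2 + (-2)*a^2*γ₁.im^2 + (-1)*a^2*γ₁.re^2 + (-1)*a^2*b*γ₂.re + a^2*b*γ₂.re*γ₂.im^2 + a^2*b*γ₂.re^3 + (-2)*a^2*b*γ₁.im^2*γ₂.re + (-1)*a^2*b*γ₁.re^2*γ₂.re + (-1)*a^3*γ₁.re + (-1)*a^3*γ₁.re*γ₂.im^2 + (-1)*a^3*γ₁.re*γ₂.re^2 + (2)*a^3*γ₁.re*γ₁.im^2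 + a^3*γ₁.re^3) * hre + ((-1)*b*γ₂.im + (-2)*b^2*γ₂.re*γ₂.im + (-1)*b^3*γ₂.re^2*γ₂.im + a*γ₁.im + (2)*a*b*γ₁.im*γ₂.re + a*b^2*γ₁.im*γ₂.re^2 + (-1)*a^2*b*γ₂.im + a^2*b*γ₂.im^3 + a^2*b*γ₂.re^2*γ₂.im + (-1)*a^2*b*γ₁.im^2*γ₂.im + (-1)*a^3*γ₁.im + (-1)*a^3*γ₁.im*γ₂.im^2 + (-1)*a^3*γ₁.im*γ₂.re^2 + a^3*γ₁.im^3) * him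
  have hkey2 : a ^ 2 * (N - (A - B) ^ 2) =
      (1 - Complex.normSq γ₂) * (a ^ 2 * (1 - Complex.normSq γ₁)) * (1 - (a - b) ^ 2) := by
    rw [hN_def, Complex.normSq_apply, hCre, hCim, hA_def, hB_def,
      Complex.normSq_apply, Complex.normSq_apply]
    linear_combination ((-1)*b^2*γ₂.im^2 + (-1)*b^3*γ₂.re*γ₂.im^2 + a*b^2*γ₁.re*γ₂.im^2 + (-1)*a^2 + a^2*γ₂.im^2 + a^2*γ₂.re^2 + (2)*a^2*γ₁.im^2 + a^2*γ₁.re^2 + a^2*b*γ₂.re + (-1)*a^2*b*γ₂.re*γ₂.im^2 + (-1)*a^2*b*γ₂.re^3 + (2)*a^2*b*γ₁.im^2*γ₂.re + a^2*b*γ₁.re^2*γ₂.re + a^3*γ₁.re + a^3*γ₁.re*γ₂.im^2 + a^3*γ₁.re*γ₂.re^2 + (-2)*a^3*γ₁.re*γ₁.im^2 + (-1)*a^3*γ₁.re^3) * hre + (b*γ₂.im + (2)*b^2*γ₂.re*γ₂.im + b^3*γ₂.re^2*γ₂.im + (-1)*a*γ₁.im + (-2)*a*b*γ₁.im*γ₂.re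 + (-1)*a*b^2*γ₁.im*γ₂.re^2 + a^2*b*γ₂.im + (-1)*a^2*b*γ₂.im^3 + (-1)*a^2*b*γ₂.re^2*γ₂.im + a^2*b*γ₁.im^2*γ₂.im + a^3*γ₁.im + a^3*γ₁.im*γ₂.im^2 + a^3*γ₁.im*γ₂.re^2 + (-1)*a^3*γ₁.im^3) * him
  have htr1 : 0 < (a + b) ^ 2 - 1 := by
    have h := mul_pos (show (0:ℝ) < a + b - 1 by linarith) (show (0:ℝ) < a + b + 1 by linarith)
    have h2 : (a + b - 1) * (a + b + 1) = (a + b) ^ 2 - 1 := by ring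
    linarith
  have htr2 : 0 < 1 - (a - b) ^ 2 := by
    have h := mul_pos (show (0:ℝ) < 1 - (a - b) by linarith) (show (0:ℝ) < 1 + (a - b) by linarith)
    have h2 : (1 - (a - b)) * (1 + (a - b)) = 1 - (a - b) ^ 2 := by ring
    linarith
  have ha2 : (0:ℝ) < a ^ 2 := by positivity
  have htri1 : 0 < (A + B) ^ 2 - N := by
    have h0 : 0 < a ^ 2 * ((A + B) ^ 2 - N) := by
      rw [hkey1]; exact mul_pos (mul_pos hm (mul_pos ha2 hu)) htr1
    have h1 := div_pos h0 ha2
    rwa [mul_div_cancel_left₀ _ (ne_of_gt ha2)] at h1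
  have htri2 : 0 < N - (A - B) ^ 2 := by
    have h0 : 0 < a ^ 2 * (N - (A - B) ^ 2) := by
      rw [hkey2]; exact mul_pos (mul_pos hm (mul_pos ha2 hu)) htr2
    have h1 := div_pos h0 ha2
    rwa [mul_div_cancel_left₀ _ (ne_of_gt ha2)] at h1
  have hNpos : 0 < N := by linarith [htri2, sq_nonneg (A - B)]
  have hCne : C ≠ 0 := by
    intro h
    rw [hN_def, h] at hNpos
    simp at hNpos
  have hCcne : (starRingEnd ℂ) C ≠ 0 := by
    simpa using hCne
  have hCC : C * (starRingEnd ℂ) C = (N : ℂ) := by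
    rw [Complex.mul_conj, hN_def]
  set k : ℝ := (N + A ^ 2 - B ^ 2) / (2 * A) with hk_def
  have hAne : A ≠ 0 := ne_of_gt hA
  have hk2 : 2 * A * k = N + A ^ 2 - B ^ 2 := by
    rw [hk_def]; field_simp
  have hs2 : 0 < N - k ^ 2 := by
    have hid : N - k ^ 2 = ((A + B) ^ 2 - N) * (N - (A - B) ^ 2) / (4 * A ^ 2) := by
      rw [hk_def]; field_simp; ring
    rw [hid]; positivity
  set s : ℝ := Real.sqrt (N - k ^ 2) with hs_def
  have hs_sq : s ^ 2 = N - k ^ 2 := Real.sq_sqrt hs2.le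
  have hs_pos : 0 < s := Real.sqrt_pos.mpr hs2
  set zp : ℂ := (k : ℂ) + (s : ℂ) * Complex.I with hzp_def
  set zm : ℂ := (k : ℂ) - (s : ℂ) * Complex.I with hzm_def
  have hnzp : Complex.normSq zp = N := by
    rw [hzp_def, Complex.normSq_add_mul_I]; linarith [hs_sq]
  have hnzm : Complex.normSq zm = N := by
    have h9 : zm = (k : ℂ) + ((-s : ℝ) : ℂ) * Complex.I := by
      rw [hzm_def]; push_cast; ring
    rw [h9, Complex.normSq_add_mul_I]; linear_combination hs_sq
  have hzpre : zp.re = k := by simp [hzp_def]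
  have hzmre : zm.re = k := by simp [hzm_def]
  set wp : ℂ := zp / (starRingEnd ℂ) C with hwp_def
  set wm : ℂ := zm / (starRingEnd ℂ) C with hwm_def
  set ep : ℂ := (C - (A : ℂ) * wp) / (B : ℂ) with hep_def
  set em : ℂ := (C - (A : ℂ) * wm) / (B : ℂ) with hem_def
  have hBne : ((B : ℝ) : ℂ) ≠ 0 := by
    simpa using ne_of_gt hB
  -- helper: abs of zz / conj C
  have habs_div : ∀ zz : ℂ, Complex.normSq zz = N →
      ‖zz / (starRingEnd ℂ) C‖ = 1 := by
    intro zz hzz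
    apply abs_eq_one_of_normSq'
    rw [map_div₀, hzz, Complex.normSq_conj, ← hN_def, div_self (ne_of_gt hNpos)]
  -- helper: abs of corresponding η
  have heta : ∀ zz : ℂ, Complex.normSq zz = N → zz.re = k →
      ‖(C - (A : ℂ) * (zz / (starRingEnd ℂ) C)) / (B : ℂ)‖ = 1 := by
    intro zz hzz hzre
    apply abs_eq_one_of_normSq'
    have hcanc : zz / (starRingEnd ℂ) C * (starRingEnd ℂ) C = zz :=
      div_mul_cancel₀ zz hCcne
    have hsub : C - (A : ℂ) * (zz / (starRingEnd ℂ) C) =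
        ((N : ℂ) - (A : ℂ) * zz) / (starRingEnd ℂ) C := by
      rw [eq_div_iff hCcne]
      linear_combination hCC - (A : ℂ) * hcanc
    have him2 : zz.im ^ 2 = N - k ^ 2 := by
      have h10 := hzz
      rw [Complex.normSq_apply] at h10
      linear_combination h10 - (zz.re + k) * hzre
    have hre2 : ((N : ℂ) - (A : ℂ) * zz).re = N - A * zz.re := by
      simp [Complex.sub_re, Complex.mul_re]
    have him3 : ((N : ℂ) - (A : ℂ) * zz).im = -(A * zz.im) := by
      simp [Complex.sub_im, Complex.mul_im]
    have hnum : Complex.normSq ((N : ℂ) - (A : ℂ) * zz) = N * B ^ 2 := by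
      rw [Complex.normSq_apply, hre2, him3]
      linear_combination (A ^ 2 * (zz.re + k) - 2 * A * N) * hzre +
        A ^ 2 * him2 - N * hk2
    rw [hsub, div_div, map_div₀, map_mul, Complex.normSq_conj, ← hN_def, hnum,
      Complex.normSq_ofReal]
    rw [show N * (B * B) = N * B ^ 2 by ring]
    exact div_self (by positivity)
  refine ⟨(wp, ep), (wm, em), ?_, ?_⟩
  · intro h
    have h1 : wp = wm := congrArg Prod.fst h
    have h2 : zp = zm := by
      have h3 := congrArg (· * (starRingEnd ℂ) C) h1
      simpa [hwp_def, hwm_def, div_mul_cancel₀, hCcne] using h3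
    have h4 := congrArg Complex.im h2
    simp [hzp_def, hzm_def] at h4
    linarith
  · intro p
    have e1 : ((1 - ‖γ₁‖ ^ 2 : ℝ) : ℂ) = ((1 - Complex.normSq γ₁ : ℝ) : ℂ) := by
      rw [Complex.sq_norm]
    have e2 : ((1 - ‖γ₂‖ ^ 2 : ℝ) : ℂ) = ((1 - Complex.normSq γ₂ : ℝ) : ℂ) := by
      rw [Complex.sq_norm]
    have hiff : ∀ w e : ℂ,
        ((a : ℂ) * w * ((1 - ‖γ₁‖ ^ 2 : ℝ) : ℂ) +
            (b : ℂ) * e * ((1 - ‖γ₂‖ ^ 2 : ℝ) : ℂ) +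
            (a : ℂ) * γ₂ + (b : ℂ) * γ₁ + γ₁ * γ₂ = 0)
          ↔ ((A : ℂ) * w + (B : ℂ) * e = C) := by
      intro w e
      rw [e1, e2, hA_def, hB_def, hC_def]
      push_cast
      constructor <;> intro h <;> linear_combination h
    have normSq_one : ∀ w : ℂ, ‖w‖ = 1 → Complex.normSq w = 1 := by
      intro w hw
      rw [← Complex.sq_norm, hw, one_pow]
    constructor
    · rintro ⟨hw, he, heq⟩
      have heq' : (A : ℂ) * p.1 + (B : ℂ) * p.2 = C := (hiff p.1 p.2).mp heq
      set z : ℂ := (starRingEnd ℂ) C * p.1 with hz_def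
      have hzn : Complex.normSq z = N := by
        rw [hz_def, map_mul, Complex.normSq_conj, ← hN_def, normSq_one p.1 hw, mul_one]
      have hB2 : Complex.normSq (C - (A : ℂ) * p.1) = B ^ 2 := by
        have h5 : (B : ℂ) * p.2 = C - (A : ℂ) * p.1 := by linear_combination heq'
        rw [← h5, map_mul, Complex.normSq_ofReal, normSq_one p.2 he, mul_one]
        ring
      have hexp : Complex.normSq (C - (A : ℂ) * p.1) =
          N + A ^ 2 * Complex.normSq p.1 - 2 * A * z.re := by
        simp only [hz_def, hN_def, Complex.normSq_apply, Complex.sub_re, Complex.sub_im,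
          Complex.mul_re, Complex.mul_im, Complex.ofReal_re, Complex.ofReal_im,
          Complex.conj_re, Complex.conj_im]
        ring
      have hzre : z.re = k := by
        have h6 : 2 * A * z.re = N + A ^ 2 - B ^ 2 := by
          rw [hexp, normSq_one p.1 hw] at hB2
          linarith
        rw [hk_def]
        field_simp
        linarith
      have h7 : z.re ^ 2 + z.im ^ 2 = N := by
        have h8 := hzn
        rw [Complex.normSq_apply] at h8
        linear_combination h8
      have hzim : z.im ^ 2 = s ^ 2 := by
        rw [hs_sq]
        linear_combination h7 - (z.re + k) * hzre
      have hp1div : p.1 = z / (starRingEnd ℂ) C := by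
        rw [hz_def, mul_comm, mul_div_assoc, div_self hCcne, mul_one]
      have hp2eq : p.2 = (C - (A : ℂ) * p.1) / (B : ℂ) := by
        rw [eq_div_iff hBne]
        linear_combination heq'
      have h11 : (z.im - s) * (z.im + s) = 0 := by linear_combination hzim
      rcases mul_eq_zero.mp h11 with h12 | h12
      · left
        have hzz : z = zp := by
          apply Complex.ext
          · rw [hzre, hzpre]
          · have : z.im = s := by linarith
            rw [this, hzp_def]
            simp
        have hp1 : p.1 = wp := by rw [hp1div, hzz, hwp_def]
        refine Prod.ext_iff.mpr ⟨hp1, ?_⟩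
        rw [hp2eq, hep_def, hp1]
      · right
        have hzz : z = zm := by
          apply Complex.ext
          · rw [hzre, hzmre]
          · have : z.im = -s := by linarith
            rw [this, hzm_def]
            simp
        have hp1 : p.1 = wm := by rw [hp1div, hzz, hwm_def]
        refine Prod.ext_iff.mpr ⟨hp1, ?_⟩
        rw [hp2eq, hem_def, hp1]
    · rintro (h | h) <;> subst h
      · refine ⟨habs_div zp hnzp, ?_, ?_⟩
        · rw [hep_def, hwp_def]
          exact heta zp hnzp hzpre
        · apply (hiff wp ep).mpr
          rw [hep_def]
          field_simp
          ring
      · refine ⟨habs_div zm hnzm, ?_, ?_⟩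
        · rw [hem_def, hwm_def]
          exact heta zm hnzm hzmre
        · apply (hiff wm em).mpr
          rw [hem_def]
          field_simp
          ring
end

section
/- Let a, b > 0, γ₁, γ₂ ∈ 𝔻 with a γ₁ + b γ₂ + 1 = 0, and let ω, η be unimodular complex numbers with a ω (1 - |γ₁|²) + b η (1 - |γ₂|²) + a γ₂ + b γ₁ + γ₁ γ₂ = 0. Then for every λ ∈ 𝔻 the identity a λ (γ₁ - ωλ)/(1 - ω conj(γ₁) λ) + b λ (γ₂ - ηλ)/(1 - η conj(γ₂) λ) + λ = a λ² (γ₂ - ηλ)/(1 - η conj(γ₂) λ) + b λ² (γ₁ - ωλ)/(1 - ω conj(γ₁) λ) + λ² (γ₁ - ωλ)(γ₂ - ηλ)/((1 - ω conj(γ₁) λ)(1 - η conj(γ₂) λ)) holds. -/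
lemma denom_ne_zero (u γ ζ : ℂ) (hu : ‖u‖ = 1)
    (hγ : ‖γ‖ < 1) (hζ : ‖ζ‖ < 1) :
    1 - u * (starRingEnd ℂ) γ * ζ ≠ 0 := by
  intro h
  have h1 : u * (starRingEnd ℂ) γ * ζ = 1 := by
    have := sub_eq_zero.mp h
    linear_combination -this
  have h2 := congrArg (‖·‖) h1
  simp only [norm_mul, norm_one, Complex.norm_conj, hu, one_mul] at h2
  have hγ0 : 0 ≤ ‖γ‖ := norm_nonneg _
  have hζ0 : 0 ≤ ‖ζ‖ := norm_nonneg _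
  nlinarith

theorem stmt_8 (a b : ℝ) (γ₁ γ₂ ω η : ℂ) (ha : 0 < a) (hb : 0 < b)
    (hγ₁ : ‖γ₁‖ < 1) (hγ₂ : ‖γ₂‖ < 1)
    (hlin : (a : ℂ) * γ₁ + (b : ℂ) * γ₂ + 1 = 0)
    (hω : ‖ω‖ = 1) (hη : ‖η‖ = 1)
    (hcond : (a : ℂ) * ω * ((1 - ‖γ₁‖ ^ 2 : ℝ) : ℂ) +
      (b : ℂ) * η * ((1 - ‖γ₂‖ ^ 2 : ℝ) : ℂ) +
      (a : ℂ) * γ₂ + (b : ℂ) * γ₁ + γ₁ * γ₂ = 0) :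
    ∀ ζ : ℂ, ‖ζ‖ < 1 →
      (a : ℂ) * ζ * ((γ₁ - ω * ζ) / (1 - ω * (starRingEnd ℂ) γ₁ * ζ)) +
        (b : ℂ) * ζ * ((γ₂ - η * ζ) / (1 - η * (starRingEnd ℂ) γ₂ * ζ)) + ζ =
      (a : ℂ) * ζ ^ 2 * ((γ₂ - η * ζ) / (1 - η * (starRingEnd ℂ) γ₂ * ζ)) +
        (b : ℂ) * ζ ^ 2 * ((γ₁ - ω * ζ) / (1 - ω * (starRingEnd ℂ) γ₁ * ζ)) +
        ζ ^ 2 * ((γ₁ - ω * ζ) * (γ₂ - η * ζ)) /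
          ((1 - ω * (starRingEnd ℂ) γ₁ * ζ) * (1 - η * (starRingEnd ℂ) γ₂ * ζ)) := by
  intro ζ hζ
  have hd1 := denom_ne_zero ω γ₁ ζ hω hγ₁ hζ
  have hd2 := denom_ne_zero η γ₂ ζ hη hγ₂ hζ
  set c₁ := (starRingEnd ℂ) γ₁ with hc₁
  set c₂ := (starRingEnd ℂ) γ₂ with hc₂
  have habs1 : ((1 - ‖γ₁‖ ^ 2 : ℝ) : ℂ) = 1 - γ₁ * c₁ := by
    rw [Complex.sq_norm, Complex.ofReal_sub, Complex.ofReal_one, ← Complex.mul_conj]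
  have habs2 : ((1 - ‖γ₂‖ ^ 2 : ℝ) : ℂ) = 1 - γ₂ * c₂ := by
    rw [Complex.sq_norm, Complex.ofReal_sub, Complex.ofReal_one, ← Complex.mul_conj]
  rw [habs1, habs2] at hcond
  -- conjugates
  have hlin' : (a : ℂ) * c₁ + (b : ℂ) * c₂ + 1 = 0 := by
    have := congrArg (starRingEnd ℂ) hlin
    simpa [map_add, map_mul, Complex.conj_ofReal] using this
  have hcond' : (a : ℂ) * (starRingEnd ℂ) ω * (1 - c₁ * γ₁) +
      (b : ℂ) * (starRingEnd ℂ) η * (1 - c₂ * γ₂) +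
      (a : ℂ) * c₂ + (b : ℂ) * c₁ + c₁ * c₂ = 0 := by
    have := congrArg (starRingEnd ℂ) hcond
    simpa [hc₁, hc₂, map_add, map_mul, map_sub, map_one, Complex.conj_ofReal] using this
  have hw : ω * (starRingEnd ℂ) ω = 1 := by
    rw [Complex.mul_conj, Complex.normSq_eq_norm_sq, hω]; norm_num
  have he : η * (starRingEnd ℂ) η = 1 := by
    rw [Complex.mul_conj, Complex.normSq_eq_norm_sq, hη]; norm_num
  have key : (a:ℂ) * ζ * (γ₁ - ω*ζ) * (1 - η*c₂*ζ) + (b:ℂ) * ζ * (γ₂ - η*ζ) * (1 - ω*c₁*ζ)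
      + ζ * ((1 - ω*c₁*ζ) * (1 - η*c₂*ζ)) =
      (a:ℂ) * ζ^2 * (γ₂ - η*ζ) * (1 - ω*c₁*ζ) + (b:ℂ) * ζ^2 * (γ₁ - ω*ζ) * (1 - η*c₂*ζ)
      + ζ^2 * ((γ₁ - ω*ζ) * (γ₂ - η*ζ)) := by
    linear_combination ζ * hlin + ζ^2 * (-hcond - (ω*c₁ + η*c₂) * hlin)
      + ζ^3 * (ω * η * hcond' + (γ₁*η + γ₂*ω) * hlin')
      - ζ^3 * (a:ℂ) * η * (1 - γ₁*c₁) * hw - ζ^3 * (b:ℂ) * ω * (1 - γ₂*c₂) * he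
      - ζ^4 * ω * η * hlin'
  have hL : (a : ℂ) * ζ * ((γ₁ - ω * ζ) / (1 - ω * c₁ * ζ)) +
        (b : ℂ) * ζ * ((γ₂ - η * ζ) / (1 - η * c₂ * ζ)) + ζ =
      ((a:ℂ) * ζ * (γ₁ - ω*ζ) * (1 - η*c₂*ζ) + (b:ℂ) * ζ * (γ₂ - η*ζ) * (1 - ω*c₁*ζ)
        + ζ * ((1 - ω*c₁*ζ) * (1 - η*c₂*ζ))) / ((1 - ω*c₁*ζ) * (1 - η*c₂*ζ)) := by
    rw [mul_div_assoc', mul_div_assoc', div_add_div _ _ hd1 hd2, div_add' _ _ _ (mul_ne_zero hd1 hd2)]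
    ring
  have hR : (a : ℂ) * ζ ^ 2 * ((γ₂ - η * ζ) / (1 - η * c₂ * ζ)) +
        (b : ℂ) * ζ ^ 2 * ((γ₁ - ω * ζ) / (1 - ω * c₁ * ζ)) +
        ζ ^ 2 * ((γ₁ - ω * ζ) * (γ₂ - η * ζ)) / ((1 - ω * c₁ * ζ) * (1 - η * c₂ * ζ)) =
      ((a:ℂ) * ζ^2 * (γ₂ - η*ζ) * (1 - ω*c₁*ζ) + (b:ℂ) * ζ^2 * (γ₁ - ω*ζ) * (1 - η*c₂*ζ)
        + ζ^2 * ((γ₁ - ω*ζ) * (γ₂ - η*ζ))) / ((1 - ω*c₁*ζ) * (1 - η*c₂*ζ)) := by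
    rw [mul_div_assoc', mul_div_assoc', div_add_div _ _ hd2 hd1, div_add_div _ _ (mul_ne_zero hd2 hd1) (mul_ne_zero hd1 hd2), div_eq_div_iff (mul_ne_zero (mul_ne_zero hd2 hd1) (mul_ne_zero hd1 hd2)) (mul_ne_zero hd1 hd2)]
    ring
  rw [hL, hR, key]
end

section
/- With Φ = (Φ₁,…,Φ_N) : D → 𝔻^N as above (so that c_D(w,z) = max_j ρ(Φ_j(w),Φ_j(z)) = c_{𝔻^N}(Φ(w),Φ(z)) for all w,z), if additionally D is c-finitely compact (Carathéodory balls are relatively compact in D), then Φ is a proper map from D to 𝔻^N. -/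
/-- The Poincaré (hyperbolic) distance on the unit disc. -/
noncomputable def poinDist (u v : ℂ) : ℝ :=
  (1 / 2) * Real.log ((1 + ‖(u - v) / (1 - (starRingEnd ℂ) u * v)‖) /
    (1 - ‖(u - v) / (1 - (starRingEnd ℂ) u * v)‖))

/-- The Carathéodory pseudodistance of `D ⊆ ℂⁿ`. -/
noncomputable def caraDist (n : ℕ) (D : Set (Fin n → ℂ)) (w z : Fin n → ℂ) : ℝ :=
  sSup {r : ℝ | ∃ F : (Fin n → ℂ) → ℂ, DifferentiableOn ℂ F D ∧
    (∀ x ∈ D, ‖F x‖ < 1) ∧ r = poinDist (F w) (F z)}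

lemma key_id (a b : ℂ) : Complex.normSq (1 - (starRingEnd ℂ) a * b) - Complex.normSq (a - b)
    = (1 - Complex.normSq a) * (1 - Complex.normSq b) := by
  simp [Complex.normSq_apply, Complex.mul_re, Complex.mul_im, Complex.sub_re, Complex.sub_im,
    Complex.one_re, Complex.one_im]
  ring

lemma abs_num_lt_denom {a b : ℂ} (ha : ‖a‖ < 1) (hb : ‖b‖ < 1) :
    ‖a - b‖ < ‖1 - (starRingEnd ℂ) a * b‖ := by
  have h1 : Complex.normSq a < 1 := by
    rw [← Complex.sq_norm]; nlinarith [norm_nonneg a]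
  have h2 : Complex.normSq b < 1 := by
    rw [← Complex.sq_norm]; nlinarith [norm_nonneg b]
  have h3 : Complex.normSq (a - b) < Complex.normSq (1 - (starRingEnd ℂ) a * b) := by
    have := key_id a b
    nlinarith
  rw [Complex.norm_def, Complex.norm_def]
  exact Real.sqrt_lt_sqrt (Complex.normSq_nonneg _) h3

lemma t_lt_one {a b : ℂ} (ha : ‖a‖ < 1) (hb : ‖b‖ < 1) :
    ‖(a - b) / (1 - (starRingEnd ℂ) a * b)‖ < 1 := by
  rw [norm_div]
  have h := abs_num_lt_denom ha hb
  have hpos : 0 < ‖1 - (starRingEnd ℂ) a * b‖ :=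
    lt_of_le_of_lt (norm_nonneg _) h
  rw [div_lt_one hpos]; exact h

lemma poin_contAt (a : ℂ) (ha : ‖a‖ < 1) {b : ℂ} (hb : ‖b‖ < 1) :
    ContinuousAt (poinDist a) b := by
  have hden : (1 - (starRingEnd ℂ) a * b) ≠ 0 := by
    intro h
    have := abs_num_lt_denom ha hb
    rw [h] at this
    simp at this
    exact absurd this (not_lt.2 (norm_nonneg _))
  have ht : ContinuousAt (fun v => ‖(a - v) / (1 - (starRingEnd ℂ) a * v)‖) b := by
    apply continuous_norm.continuousAt.comp
    exact ContinuousAt.div (by fun_prop) (by fun_prop) hden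
  have htb : ‖(a - b) / (1 - (starRingEnd ℂ) a * b)‖ < 1 := t_lt_one ha hb
  have htb0 : 0 ≤ ‖(a - b) / (1 - (starRingEnd ℂ) a * b)‖ := norm_nonneg _
  unfold poinDist
  apply ContinuousAt.mul continuousAt_const
  apply ContinuousAt.log
  · exact ContinuousAt.div (continuousAt_const.add ht) (continuousAt_const.sub ht)
      (by linarith)
  · exact ne_of_gt (div_pos (by linarith) (by linarith))

theorem stmt_13 (n N : ℕ) (hN : 0 < N) (D : Set (Fin n → ℂ)) (hD : IsOpen D)
    (hconn : IsConnected D)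
    (Φ : Fin N → (Fin n → ℂ) → ℂ)
    (hΦd : ∀ j, DifferentiableOn ℂ (Φ j) D)
    (hΦm : ∀ j, ∀ x ∈ D, ‖Φ j x‖ < 1)
    (huniv : ∀ w ∈ D, ∀ z ∈ D, caraDist n D w z = ⨆ j, poinDist (Φ j w) (Φ j z))
    (hfincpt : ∀ w ∈ D, ∀ r : ℝ, 0 < r →
      closure {z | z ∈ D ∧ caraDist n D w z < r} ⊆ D ∧
      IsCompact (closure {z | z ∈ D ∧ caraDist n D w z < r})) :
    ∀ K : Set (Fin N → ℂ), IsCompact K → K ⊆ {u | ∀ j, ‖u j‖ < 1} →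
      IsCompact {x | x ∈ D ∧ (fun j => Φ j x) ∈ K} := by
  intro K hK hKsub
  haveI : Nonempty (Fin N) := ⟨⟨0, hN⟩⟩
  obtain ⟨w, hw⟩ := hconn.nonempty
  set S : Set (Fin n → ℂ) := {x | x ∈ D ∧ (fun j => Φ j x) ∈ K} with hS
  -- bound per coordinate
  have hcont : ∀ j : Fin N, ContinuousOn (fun u : Fin N → ℂ => poinDist (Φ j w) (u j)) K := by
    intro j
    apply continuousOn_of_forall_continuousAt
    intro u hu
    have : ContinuousAt ((poinDist (Φ j w)) ∘ (fun u : Fin N → ℂ => u j)) u :=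
      ContinuousAt.comp (x := u) (poin_contAt (Φ j w) (hΦm j w hw) (hKsub hu j))
        (continuous_apply j).continuousAt
    exact this
  choose C hC using fun j => hK.exists_bound_of_continuousOn (hcont j)
  set M : ℝ := ⨆ j, C j with hM
  have hMb : ∀ j, C j ≤ M := fun j => le_ciSup (Set.Finite.bddAbove (Set.finite_range C)) j
  set r : ℝ := max M 0 + 1 with hr
  have hrpos : 0 < r := by positivity
  have hball := hfincpt w hw r hrpos
  -- S is contained in the ball
  have hSsub : S ⊆ {z | z ∈ D ∧ caraDist n D w z < r} := by
    intro x hx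
    refine ⟨hx.1, ?_⟩
    rw [huniv w hw x hx.1]
    have : (⨆ j, poinDist (Φ j w) (Φ j x)) ≤ M := by
      apply ciSup_le
      intro j
      have := hC j _ hx.2
      calc poinDist (Φ j w) (Φ j x) ≤ ‖poinDist (Φ j w) (Φ j x)‖ := le_abs_self _
        _ ≤ C j := this
        _ ≤ M := hMb j
    calc (⨆ j, poinDist (Φ j w) (Φ j x)) ≤ M := this
      _ ≤ max M 0 := le_max_left _ _
      _ < r := by rw [hr]; linarith
  -- S is closed
  have hclS : closure S ⊆ S := by
    intro x hx
    have hxD : x ∈ D := hball.1 ((closure_mono hSsub) hx)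
    refine ⟨hxD, ?_⟩
    have hcw : ContinuousWithinAt (fun y => (fun j => Φ j y)) S x := by
      rw [continuousWithinAt_pi]
      intro j
      exact (((hΦd j).continuousOn x hxD).mono (fun y hy => hy.1))
    have := hcw.mem_closure_image hx
    have himg : (fun y => (fun j => (Φ j y))) '' S ⊆ K := by
      rintro _ ⟨y, hy, rfl⟩; exact hy.2
    exact hK.isClosed.closure_subset ((closure_mono himg) this)
  have hSclosed : IsClosed S := isClosed_of_closure_subset hclS
  exact (hball.2).of_isClosed_subset hSclosed
    (hSsub.trans subset_closure)
end

section
/- For t ∈ ℝ, the map f_t(λ) = ((t² + λ)/(1 + t²), t(λ - 1)/(1 + t²)) sends the open unit disc 𝔻 into the open Euclidean unit ball 𝔹₂ ⊂ ℂ². -/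
theorem stmt_14 (t : ℝ) (ζ : ℂ) (hζ : ‖ζ‖ < 1) :
    ‖((t : ℂ) ^ 2 + ζ) / (1 + (t : ℂ) ^ 2)‖ ^ 2 +
      ‖(t : ℂ) * (ζ - 1) / (1 + (t : ℂ) ^ 2)‖ ^ 2 < 1 := by
  have ha : (0:ℝ) < 1 + t ^ 2 := by positivity
  have h1 : ‖1 + (t : ℂ) ^ 2‖ = 1 + t ^ 2 := by
    have : (1 + (t:ℂ)^2) = ((1 + t^2 : ℝ) : ℂ) := by push_cast; ring
    rw [this, Complex.norm_real, Real.norm_eq_abs, abs_of_pos ha]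
  have hz : Complex.normSq ζ < 1 := by
    rw [← Complex.sq_norm]
    nlinarith [norm_nonneg ζ]
  rw [norm_div, norm_div, h1, div_pow, div_pow, ← add_div,
    div_lt_one (by positivity)]
  rw [Complex.sq_norm, Complex.sq_norm]
  simp only [Complex.normSq_apply, Complex.add_re, Complex.add_im, Complex.mul_re,
    Complex.mul_im, Complex.sub_re, Complex.sub_im, Complex.ofReal_re, Complex.ofReal_im,
    Complex.one_re, Complex.one_im, pow_two, Complex.normSq_apply] at hz ⊢
  nlinarith [hz, sq_nonneg t, sq_nonneg (t*t)]
end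

section
/- The function F(z₁, z₂) = (2 z₁(1 - z₁) - z₂²)/(2(1 - z₁) - z₂²) maps the open unit ball 𝔹₂ ⊂ ℂ² into the open unit disc 𝔻, and satisfies F(z₁, 0) = z₁ for all z₁ ∈ 𝔻. -/
lemma key_ineq (z₁ z₂ : ℂ) (h : Complex.normSq z₁ + Complex.normSq z₂ < 1) :
    Complex.normSq (2*z₁*(1-z₁) - z₂^2) < Complex.normSq (2*(1-z₁) - z₂^2) := by
  obtain ⟨a, b⟩ := z₁
  obtain ⟨c, d⟩ := z₂
  simp only [Complex.normSq_mk] at h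
  have hm : 0 < (1-a)^2 + b^2 := by nlinarith [sq_nonneg a, sq_nonneg b, sq_nonneg (a-1)]
  simp only [Complex.normSq_apply, pow_two, Complex.mul_re, Complex.mul_im, Complex.sub_re,
    Complex.sub_im, Complex.one_re, Complex.one_im, Complex.re_ofNat, Complex.im_ofNat]
  ring_nf
  nlinarith [sq_nonneg (((1-a)^2-b^2)*2*c*d + 2*(1-a)*b*(c^2-d^2)),
    mul_pos hm (by linarith : (0:ℝ) < 1 - (a^2+b^2+(c^2+d^2))), sq_nonneg (c^2+d^2),
    sq_nonneg (c*d), mul_nonneg (le_of_lt hm) (sq_nonneg c), mul_nonneg (le_of_lt hm) (sq_nonneg d)]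

theorem stmt_16 :
    (∀ z₁ z₂ : ℂ, ‖z₁‖ ^ 2 + ‖z₂‖ ^ 2 < 1 →
      2 * (1 - z₁) - z₂ ^ 2 ≠ 0 ∧
      ‖(2 * z₁ * (1 - z₁) - z₂ ^ 2) / (2 * (1 - z₁) - z₂ ^ 2)‖ < 1) ∧
    (∀ z₁ : ℂ, ‖z₁‖ < 1 →
      (2 * z₁ * (1 - z₁) - (0 : ℂ) ^ 2) / (2 * (1 - z₁) - (0 : ℂ) ^ 2) = z₁) := by
  constructor
  · intro z₁ z₂ h
    rw [Complex.sq_norm, Complex.sq_norm] at h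
    have key := key_ineq z₁ z₂ h
    have hDpos : 0 < Complex.normSq (2*(1-z₁) - z₂^2) :=
      lt_of_le_of_lt (Complex.normSq_nonneg _) key
    have hD : 2 * (1 - z₁) - z₂ ^ 2 ≠ 0 := by
      intro hz
      rw [hz] at hDpos
      simp at hDpos
    refine ⟨hD, ?_⟩
    rw [norm_div, div_lt_one (norm_pos_iff.mpr hD)]
    have := Real.sqrt_lt_sqrt (Complex.normSq_nonneg _) key
    simpa [Complex.norm_def] using this
  · intro z₁ h
    have h1 : (1 : ℂ) - z₁ ≠ 0 := by
      intro hz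
      have : z₁ = 1 := by linear_combination -hz
      simp [this] at h
    field_simp
    ring
end

section
/- For z ∈ ∂𝔹₂ (|z₁|² + |z₂|² = 1) with 2(1 - z₁) - z₂² ≠ 0, the function F(z₁, z₂) = (2z₁(1-z₁) - z₂²)/(2(1-z₁) - z₂²) satisfies |F(z)| = 1 if and only if Im(z₂(1 - conj(z₁))) = 0. -/
theorem stmt_17 (z₁ z₂ : ℂ)
    (hsphere : ‖z₁‖ ^ 2 + ‖z₂‖ ^ 2 = 1)
    (hden : 2 * (1 - z₁) - z₂ ^ 2 ≠ 0) :
    ‖(2 * z₁ * (1 - z₁) - z₂ ^ 2) / (2 * (1 - z₁) - z₂ ^ 2)‖ = 1 ↔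
      (z₂ * (1 - (starRingEnd ℂ) z₁)).im = 0 := by
  have hs : z₁.re ^ 2 + z₁.im ^ 2 + (z₂.re ^ 2 + z₂.im ^ 2) = 1 := by
    simp only [Complex.sq_norm, Complex.normSq_apply] at hsphere
    nlinarith [hsphere]
  have key : ‖2 * (1 - z₁) - z₂ ^ 2‖ ^ 2
      - ‖2 * z₁ * (1 - z₁) - z₂ ^ 2‖ ^ 2
      = 8 * ((z₂ * (1 - (starRingEnd ℂ) z₁)).im) ^ 2 := by
    simp only [pow_two z₂]
    simp only [Complex.sq_norm, Complex.normSq_apply, Complex.sub_re, Complex.sub_im,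
      Complex.mul_re, Complex.mul_im, Complex.one_re, Complex.one_im, Complex.conj_re,
      Complex.conj_im, Complex.re_ofNat, Complex.im_ofNat]
    ring_nf
    linear_combination (-4 * z₁.re ^ 2 + 8 * z₁.re - 4 * z₁.im ^ 2 - 4) * hs
  have hDpos : 0 < ‖2 * (1 - z₁) - z₂ ^ 2‖ := by
    simpa using norm_pos_iff.mpr hden
  rw [norm_div, div_eq_one_iff_eq (ne_of_gt hDpos)]
  constructor
  · intro h
    rw [h] at key
    have h2 : ((z₂ * (1 - (starRingEnd ℂ) z₁)).im) ^ 2 = 0 := by linarith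
    exact pow_eq_zero_iff (by norm_num) |>.mp h2
  · intro h
    rw [h] at key
    have h2 : ‖2 * z₁ * (1 - z₁) - z₂ ^ 2‖ ^ 2
        = ‖2 * (1 - z₁) - z₂ ^ 2‖ ^ 2 := by
      linarith
    have h3 : (‖2 * z₁ * (1 - z₁) - z₂ ^ 2‖ - ‖2 * (1 - z₁) - z₂ ^ 2‖)
        * (‖2 * z₁ * (1 - z₁) - z₂ ^ 2‖ + ‖2 * (1 - z₁) - z₂ ^ 2‖) = 0 := by
      nlinarith [h2]
    rcases mul_eq_zero.mp h3 with h4 | h4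
    · linarith
    · nlinarith [norm_nonneg (2 * z₁ * (1 - z₁) - z₂ ^ 2)]
end
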